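/- The linear map T : x ↦ α·p·x·η(p) on ℍ(K) (viewed as a 4-dimensional K-space, or the induced ℝ-linear map on ℝ^4) has trace α·N(tr(p)) and determinant α⁴·N(|p|⁴), where tr(p) = p + p̄ is the reduced trace, |p|² = p p̄ the reduced norm, and N(β) = ββ' the field norm of K = ℚ(√5). -/

import Mathlib

open Polynomial Quaternion

noncomputable section

set_option maxRecDepth 8000
set_option synthInstance.maxHeartbeats 1000000
set_option maxHeartbeats 1000000

def f5 : ℚ[X] := X ^ 2 - C 5

instance f5_irred : Fact (Irreducible f5) := ⟨by
  unfold f5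
  apply X_pow_sub_C_irreducible_of_prime Nat.prime_two
  intro b hb
  have h5 : Irrational (Real.sqrt 5) := (Nat.prime_five).irrational_sqrt
  have hb' : ((b : ℝ)) ^ 2 = 5 := by exact_mod_cast congrArg (fun q : ℚ => (q : ℝ)) hb
  have heq : Real.sqrt 5 = |(b : ℝ)| := by
    rw [← hb', Real.sqrt_sq_eq_abs]
  rw [heq] at h5
  exact h5 ⟨|b|, by push_cast; ring⟩⟩

abbrev K : Type := AdjoinRoot f5

instance : Field K := inferInstance
instance : SMul K (Quaternion K) := inferInstance
instance : Algebra K (Quaternion K) := inferInstance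

def sqrt5 : K := AdjoinRoot.root f5

lemma sqrt5_sq : sqrt5 ^ 2 = 5 := by
  have h : AdjoinRoot.mk f5 (X ^ 2 - C 5) = 0 := AdjoinRoot.mk_self
  rw [map_sub, map_pow, AdjoinRoot.mk_X, AdjoinRoot.mk_C, sub_eq_zero, map_ofNat] at h
  exact h

def conjK : K →+* K :=
  AdjoinRoot.lift (algebraMap ℚ K) (-sqrt5) (by
    simp only [f5, eval₂_sub, eval₂_pow, eval₂_X, eval₂_C, sub_eq_zero]
    have h : (-sqrt5) ^ 2 = sqrt5 ^ 2 := by ring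
    rw [h, sqrt5_sq]
    simp)

def τ : K := (1 + sqrt5) / 2

abbrev ℍK := Quaternion K

def twist (x : ℍK) : ℍK := ⟨conjK x.re, conjK x.imI, conjK x.imK, conjK x.imJ⟩

def icoB : Fin 4 → ℍK :=
  ![1, ⟨0,1,0,0⟩, ⟨1/2,1/2,1/2,1/2⟩, ⟨(1-τ)/2, τ/2, 0, 1/2⟩]

def Ico : AddSubgroup ℍK :=
  AddSubgroup.closure (Set.range icoB ∪ Set.range fun i => τ • icoB i)

def lB : Fin 4 → ℍK :=
  ![1, ⟨-(1/2),1/2,1/2,1/2⟩, ⟨0,-1,0,0⟩, ⟨0,1/2,(τ-1)/2,-(τ/2)⟩]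

def LatA4 : AddSubgroup ℍK := AddSubgroup.closure (Set.range lB)

def LatATau : AddSubgroup ℍK :=
  AddSubgroup.closure (Set.range lB ∪ Set.range fun i => τ • lB i)


/-- The K-linear map x ↦ α·p·x·η(p) on ℍ(K). -/
def simT (α : ℚ) (p : ℍK) : ℍK →ₗ[K] ℍK :=
  algebraMap ℚ K α • ((LinearMap.mulRight K (twist p)).comp (LinearMap.mulLeft K p))

def mkK (a b c d : K) : ℍK := ⟨a, b, c, d⟩

@[simp] lemma mkK_re (a b c d : K) : (mkK a b c d).re = a := rfl
@[simp] lemma mkK_imI (a b c d : K) : (mkK a b c d).imI = b := rfl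
@[simp] lemma mkK_imJ (a b c d : K) : (mkK a b c d).imJ = c := rfl
@[simp] lemma mkK_imK (a b c d : K) : (mkK a b c d).imK = d := rfl

lemma twist_eq (x : ℍK) : twist x = mkK (conjK x.re) (conjK x.imI) (conjK x.imK) (conjK x.imJ) := rfl

theorem my_det_fin_four {R : Type*} [CommRing R] (A : Matrix (Fin 4) (Fin 4) R) :
    A.det =
    A 0 0 * (A 1 1*A 2 2*A 3 3 - A 1 1*A 2 3*A 3 2 - A 1 2*A 2 1*A 3 3 + A 1 2*A 2 3*A 3 1 + A 1 3*A 2 1*A 3 2 - A 1 3*A 2 2*A 3 1)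
  - A 0 1 * (A 1 0*A 2 2*A 3 3 - A 1 0*A 2 3*A 3 2 - A 1 2*A 2 0*A 3 3 + A 1 2*A 2 3*A 3 0 + A 1 3*A 2 0*A 3 2 - A 1 3*A 2 2*A 3 0)
  + A 0 2 * (A 1 0*A 2 1*A 3 3 - A 1 0*A 2 3*A 3 1 - A 1 1*A 2 0*A 3 3 + A 1 1*A 2 3*A 3 0 + A 1 3*A 2 0*A 3 1 - A 1 3*A 2 1*A 3 0)
  - A 0 3 * (A 1 0*A 2 1*A 3 2 - A 1 0*A 2 2*A 3 1 - A 1 1*A 2 0*A 3 2 + A 1 1*A 2 2*A 3 0 + A 1 2*A 2 0*A 3 1 - A 1 2*A 2 1*A 3 0) := by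
  rw [Matrix.det_succ_row_zero, Fin.sum_univ_four]
  simp [Matrix.det_fin_three, Matrix.submatrix_apply, Fin.succAbove, Fin.lt_def, show (Fin.succ 2 : Fin 4) = 3 from rfl, show (((3:Fin 4)):ℕ) = 3 from rfl, show (Fin.castSucc 2 : Fin 4) = 2 from rfl, pow_succ, pow_zero]
  ring

/-- the map T : x ↦ α·p·x·η(p) has trace α·N(tr(p)) and
determinant α⁴·N(|p|⁴), where tr(p) = p + p̄, |p|² = nr(p) = p·p̄ and
N(β) = β·β' is the field norm of ℚ(√5). -/
theorem trace_det_simT (α : ℚ) (p : ℍK) :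
    LinearMap.trace K ℍK (simT α p) =
      algebraMap ℚ K α * ((p + star p).re * conjK ((p + star p).re)) ∧
    LinearMap.det (simT α p) =
      algebraMap ℚ K α ^ 4 * (normSq p ^ 2 * conjK (normSq p ^ 2)) := by
  set c := algebraMap ℚ K α with hc
  set b : Module.Basis (Fin 4) K ℍK := QuaternionAlgebra.basisOneIJK (-1 : K) 0 (-1) with hbdef
  have hrepr : ∀ (x : ℍK) (i : Fin 4), b.repr x i = ![x.re, x.imI, x.imJ, x.imK] i := by
    intro x i
    rw [hbdef]
    exact congrFun (QuaternionAlgebra.coe_basisOneIJK_repr (-1 : K) 0 (-1) x) i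
  have hbj : ∀ j, b j = ![(1:ℍK), mkK 0 1 0 0, mkK 0 0 1 0, mkK 0 0 0 1] j := by
    intro j
    apply b.repr.injective
    ext i
    rw [Module.Basis.repr_self, hrepr]
    fin_cases i <;> fin_cases j <;>
      simp [Finsupp.single_apply, Quaternion.re_one, Quaternion.imI_one,
        Quaternion.imJ_one, Quaternion.imK_one]
  have hM : ∀ i j, LinearMap.toMatrix b b (simT α p) i j =
      ![(c • (p * b j * twist p)).re, (c • (p * b j * twist p)).imI,
        (c • (p * b j * twist p)).imJ, (c • (p * b j * twist p)).imK] i := by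
    intro i j
    rw [LinearMap.toMatrix_apply]
    have h2 : simT α p (b j) = c • (p * b j * twist p) := by
      simp [simT, hc]
    rw [h2, hrepr]
  have e1 : (1:ℍK) = mkK 1 0 0 0 := rfl
  constructor
  · rw [LinearMap.trace_eq_matrix_trace K b, Matrix.trace, Fin.sum_univ_four]
    simp only [Matrix.diag_apply, hM, hbj]
    simp [e1, twist_eq, Quaternion.re_mul, Quaternion.imI_mul, Quaternion.imJ_mul,
      Quaternion.imK_mul, QuaternionAlgebra.re_mul, QuaternionAlgebra.imI_mul,
      QuaternionAlgebra.imJ_mul, QuaternionAlgebra.imK_mul, Quaternion.re_smul, Quaternion.imI_smul, Quaternion.imJ_smul,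
      Quaternion.imK_smul, smul_eq_mul, map_add, map_mul, map_pow]
    ring
  · rw [← LinearMap.det_toMatrix b, my_det_fin_four]
    simp only [hM, hbj]
    simp [e1, twist_eq, Quaternion.re_mul, Quaternion.imI_mul, Quaternion.imJ_mul,
      Quaternion.imK_mul, QuaternionAlgebra.re_mul, QuaternionAlgebra.imI_mul,
      QuaternionAlgebra.imJ_mul, QuaternionAlgebra.imK_mul, Quaternion.re_smul, Quaternion.imI_smul, Quaternion.imJ_smul,
      Quaternion.imK_smul, smul_eq_mul, Quaternion.normSq_def', map_add, map_mul, map_pow]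
    ring
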